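/- Let f : X → X be a homeomorphism of an infinite compact metric space. If f is (m,n)-expansive with expansive constant δ, and n' ≤ n and m - n ≤ m' - n', then f is (m',n')-expansive with the same expansive constant δ. -/

import Mathlib

variable {X : Type*} [MetricSpace X]

/-- The `k`-th iterate (`k ∈ ℤ`) of a homeomorphism, as a function. -/
noncomputable def hiter (f : X ≃ₜ X) (k : ℤ) : X → X := ⇑(f.toEquiv ^ k)

/-- A set is `δ`-separated if distinct points are at distance `> δ`. -/
def IsSeparated' (δ : ℝ) (B : Set X) : Prop :=
  ∀ x ∈ B, ∀ y ∈ B, x ≠ y → δ < dist x y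

/-- The `δ`-cardinality of a set: sup of cardinalities of `δ`-separated subsets. -/
noncomputable def dCard (δ : ℝ) (A : Set X) : ℕ∞ :=
  ⨆ B ∈ {B : Set X | B ⊆ A ∧ IsSeparated' δ B}, B.encard

/-- `(m,n)`-expansiveness with a given expansive constant `δ`. -/
def MNExpansiveWith (f : X ≃ₜ X) (m n : ℕ) (δ : ℝ) : Prop :=
  ∀ A : Set X, A.encard = m → ∃ k : ℤ, (n : ℕ∞) < dCard δ (hiter f k '' A)

/-- `(m,n)`-expansiveness. -/
def MNExpansive (f : X ≃ₜ X) (m n : ℕ) : Prop :=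
  ∃ δ > 0, MNExpansiveWith f m n δ

lemma dCard_mono (δ : ℝ) {A A' : Set X} (h : A ⊆ A') : dCard δ A ≤ dCard δ A' :=
  iSup₂_le fun B hB => le_iSup₂_of_le B ⟨hB.1.trans h, hB.2⟩ le_rfl

lemma dCard_union_le (δ : ℝ) (A C : Set X) :
    dCard δ (A ∪ C) ≤ dCard δ A + C.encard := by
  refine iSup₂_le fun B hB => ?_
  obtain ⟨hBsub, hBsep⟩ := hB
  have h1 : (B ∩ A).encard ≤ dCard δ A :=
    le_iSup₂_of_le (B ∩ A)
      ⟨Set.inter_subset_right, fun x hx y hy => hBsep x hx.1 y hy.1⟩ le_rfl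
  have h2 : (B \ A).encard ≤ C.encard :=
    Set.encard_le_encard (fun x hx => (hBsub hx.1).resolve_left hx.2)
  calc B.encard = ((B ∩ A) ∪ (B \ A)).encard := by rw [Set.inter_union_diff]
    _ ≤ (B ∩ A).encard + (B \ A).encard := Set.encard_union_le _ _
    _ ≤ _ := add_le_add h1 h2

theorem stmt2 [CompactSpace X] [Infinite X] (f : X ≃ₜ X) (m n m' n' : ℕ)
    (h1 : n < m) (h2 : 1 ≤ n) (h3 : n' < m') (h4 : 1 ≤ n')
    (h5 : n' ≤ n) (h6 : m - n ≤ m' - n') (δ : ℝ) (hδ : 0 < δ)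
    (hf : MNExpansiveWith f m n δ) : MNExpansiveWith f m' n' δ := by
  intro A' hA'
  by_contra hcon
  push_neg at hcon
  -- pick B ⊆ A' of size m - (n - n')
  obtain ⟨B, hBsub, hBcard⟩ :=
    Set.exists_subset_encard_eq (s := A') (k := ((m - (n - n') : ℕ) : ℕ∞))
      (by rw [hA']; exact_mod_cast (by omega : m - (n - n') ≤ m'))
  have hBfin : B.Finite := Set.finite_of_encard_eq_coe hBcard
  -- pick C disjoint from B of size n - n'
  obtain ⟨t, htsub, htcard⟩ := hBfin.infinite_compl.exists_subset_card_eq (n - n')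
  set C : Set X := ↑t with hC
  have hCcard : C.encard = ((n - n' : ℕ) : ℕ∞) := by
    rw [hC, Set.encard_coe_eq_coe_finsetCard, htcard]
  have hdisj : Disjoint B C := by
    rw [Set.disjoint_right]
    intro x hx
    exact htsub hx
  have hAcard : (B ∪ C).encard = (m : ℕ∞) := by
    rw [Set.encard_union_eq hdisj, hBcard, hCcard, ← Nat.cast_add]
    congr 1
    omega
  obtain ⟨k, hk⟩ := hf (B ∪ C) hAcard
  have hinj : Function.Injective (hiter f k) := (f.toEquiv ^ k).injective
  have hle : dCard δ (hiter f k '' (B ∪ C)) ≤ (n : ℕ∞) := by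
    rw [Set.image_union]
    calc dCard δ (hiter f k '' B ∪ hiter f k '' C)
        ≤ dCard δ (hiter f k '' B) + (hiter f k '' C).encard := dCard_union_le _ _ _
      _ ≤ dCard δ (hiter f k '' A') + ((n - n' : ℕ) : ℕ∞) := by
          refine add_le_add (dCard_mono _ (Set.image_mono hBsub)) ?_
          rw [hinj.encard_image, hCcard]
      _ ≤ (n' : ℕ∞) + ((n - n' : ℕ) : ℕ∞) := add_le_add_left (hcon k) _
      _ = (n : ℕ∞) := by rw [← Nat.cast_add]; congr 1; omega
  exact absurd (hk.trans_le hle) (lt_irrefl _)
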